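/- Let F be a subfield of ℝ, a ∈ F, and K = [a, ∞). Suppose f ∈ F[x] is nonnegative on K and f(c) = 0 for some c in the interior of K. Then the square of the minimal polynomial g of c over F divides f in F[x], and f/g² is again nonnegative on K. -/

import Mathlib

open Polynomial
open Filter

noncomputable def pev (F : Subfield ℝ) (f : F[X]) (x : ℝ) : ℝ := Polynomial.aeval x f

/-- `σ` is a finite sum of terms `t·g²` with `t ∈ F`, `t ≥ 0`, `g ∈ F[x]`. -/
def SumWtSq (F : Subfield ℝ) (σ : F[X]) : Prop :=
  ∃ (n : ℕ) (t : Fin n → F) (g : Fin n → F[X]),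
    (∀ i, (0:ℝ) ≤ (t i : ℝ)) ∧ σ = ∑ i, C (t i) * g i ^ 2

lemma pev_eq (F : Subfield ℝ) (f : F[X]) (x : ℝ) :
    pev F f x = (f.map (algebraMap F ℝ)).eval x := by
  unfold pev; rw [aeval_def, eval₂_eq_eval_map]

theorem stmt15 (F : Subfield ℝ) (a : F) (f : F[X])
    (hf : ∀ x : ℝ, (a:ℝ) ≤ x → 0 ≤ pev F f x)
    (c : ℝ) (hc : (a:ℝ) < c) (hfc : pev F f c = 0) :
    ∃ h : F[X], f = (minpoly F c) ^ 2 * h ∧ ∀ x : ℝ, (a:ℝ) ≤ x → 0 ≤ pev F h x := by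
  by_cases hf0 : f = 0
  · exact ⟨0, by simp [hf0], fun x _ => by simp [pev]⟩
  set φ := algebraMap F ℝ with hφ
  have hmapinj : Function.Injective φ := φ.injective
  have haevalc : aeval c f = 0 := hfc
  have hint : IsIntegral F c :=
    (isAlgebraic_iff_isIntegral).mp ⟨f, hf0, haevalc⟩
  set g := minpoly F c with hg
  have hg0 : g ≠ 0 := minpoly.ne_zero hint
  obtain ⟨q, hq⟩ : g ∣ f := minpoly.dvd F c haevalc
  have hq0 : q ≠ 0 := by rintro rfl; simp at hq; exact hf0 hq
  set fR := f.map φ with hfR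
  set gR := g.map φ with hgR
  set qR := q.map φ with hqR
  have hfR0 : fR ≠ 0 := fun h => hf0 ((Polynomial.map_eq_zero_iff hmapinj).mp h)
  have hgR0 : gR ≠ 0 := fun h => hg0 ((Polynomial.map_eq_zero_iff hmapinj).mp h)
  have hqR0 : qR ≠ 0 := fun h => hq0 ((Polynomial.map_eq_zero_iff hmapinj).mp h)
  have hfmul : fR = gR * qR := by rw [hfR, hgR, hqR, hq, Polynomial.map_mul]
  have hfcR : fR.eval c = 0 := by rw [pev_eq] at hfc; exact hfc
  -- c is a local min of fR
  have hlm : IsLocalMin (fun x => fR.eval x) c := by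
    have hmem : Set.Ioi (a:ℝ) ∈ nhds c := Ioi_mem_nhds hc
    refine Filter.eventually_of_mem hmem fun y hy => ?_
    show fR.eval c ≤ fR.eval y
    rw [hfcR]
    have := hf y (le_of_lt hy)
    rwa [pev_eq, ← hfR] at this
  have hderiv : fR.derivative.eval c = 0 := by
    have := hlm.deriv_eq_zero
    rwa [Polynomial.deriv] at this
  have hmult2 : 1 < fR.rootMultiplicity c :=
    (one_lt_rootMultiplicity_iff_isRoot hfR0).mpr ⟨hfcR, hderiv⟩
  have hsepR : gR.Separable := ((minpoly.irreducible hint).separable).map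
  have hgc : gR.IsRoot c := by
    have : aeval c g = 0 := minpoly.aeval F c
    rw [aeval_def, eval₂_eq_eval_map] at this
    exact this
  have hmg1 : gR.rootMultiplicity c = 1 :=
    le_antisymm (rootMultiplicity_le_one_of_separable hsepR c)
      ((rootMultiplicity_pos hgR0).mpr hgc)
  have hqc : aeval c q = 0 := by
    have hmul := rootMultiplicity_mul (x := c) (hfmul ▸ hfR0)
    rw [← hfmul] at hmul
    have : 0 < qR.rootMultiplicity c := by omega
    have := (rootMultiplicity_pos hqR0).mp this
    rw [aeval_def, eval₂_eq_eval_map]; exact this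
  obtain ⟨h, hh⟩ : g ∣ q := minpoly.dvd F c hqc
  refine ⟨h, by rw [hq, hh]; ring, fun x hx => ?_⟩
  set hR := h.map φ with hhR
  have hhf : fR = gR ^ 2 * hR := by
    rw [hfR, hgR, hhR, hq, hh]; push_cast [Polynomial.map_mul, Polynomial.map_pow]; ring
  -- h nonneg at points where gR ≠ 0
  have key : ∀ y : ℝ, (a:ℝ) ≤ y → gR.eval y ≠ 0 → 0 ≤ hR.eval y := by
    intro y hy hgy
    have h1 := hf y hy
    rw [pev_eq, ← hfR, hhf] at h1
    have h2 : (0:ℝ) < (gR.eval y) ^ 2 := by positivity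
    simp only [eval_mul, eval_pow] at h1
    nlinarith [h1, h2]
  -- density / limit argument
  rw [pev_eq, ← hhR]
  have hcont : ContinuousAt (fun y => hR.eval y) x := (Polynomial.continuous hR).continuousAt
  have htend : Tendsto (fun y => hR.eval y) (nhdsWithin x (Set.Ioi x)) (nhds (hR.eval x)) :=
    hcont.continuousWithinAt.tendsto
  refine ge_of_tendsto htend ?_
  have hroots : Set.Finite {y : ℝ | gR.IsRoot y} := Polynomial.finite_setOf_isRoot hgR0
  have hTc : {y : ℝ | gR.IsRoot y}ᶜ ∪ {x} ∈ nhds x := by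
    have hT : IsClosed ({y : ℝ | gR.IsRoot y} \ {x}) := (Set.Finite.diff hroots).isClosed
    have : ({y : ℝ | gR.IsRoot y} \ {x})ᶜ ∈ nhds x :=
      hT.isOpen_compl.mem_nhds (by simp)
    filter_upwards [this] with y hy
    by_cases hyx : y = x
    · right; exact hyx
    · left; intro hmem; exact hy ⟨hmem, hyx⟩
  filter_upwards [self_mem_nhdsWithin, mem_nhdsWithin_of_mem_nhds hTc] with y hy hy2
  have hya : (a:ℝ) ≤ y := le_trans hx (le_of_lt hy)
  rcases hy2 with h1 | h1
  · exact key y hya h1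
  · exact absurd h1 (ne_of_gt hy)
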